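/- Let Σ be a finite alphabet with |Σ| = σ and let w ∈ Σ*. Then the number of even lengths 2k ≥ 2 such that the prefix w[1..2k] is a parameterized square and no fragment w[i..i+2k−1] of w with i > 1 is parameterized-equivalent to w[1..2k] is at most 2·σ!. -/

import Mathlib

/-- Words `u` and `v` are parameterized-equivalent if `|u| = |v|` and there is a bijection
`f : Alph(u) → Alph(v)` with `v[i] = f(u[i])` for all `i`; equivalently, `v = u.map f` for
some function `f` injective on the set of letters of `u`. -/
def ParamEquiv {α : Type*} (u v : List α) : Prop :=
  ∃ f : α → α, Set.InjOn f {a | a ∈ u} ∧ v = u.map f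

/-- A parameterized square is a word `u ++ v` with `|u| = |v|` and `u`, `v`
parameterized-equivalent. -/
def IsParamSquare {α : Type*} (s : List α) : Prop :=
  ∃ u v : List α, s = u ++ v ∧ u.length = v.length ∧ ParamEquiv u v

/-- The fragment of `w` of length `len` starting at (0-based) position `i`. -/
def frag {α : Type*} (w : List α) (i len : ℕ) : List α :=
  (w.drop i).take len

/-! ### Auxiliary lemmas about periodic functions -/

/-- Reduce an index modulo a period. -/
lemma PSq.redmod {β : Type*} (v : ℕ → β) (t L : ℕ) (ht : 0 < t)
    (H : ∀ x, x + t < L → v (x + t) = v x) :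
    ∀ x, x < L → v x = v (x % t) := by
  intro x
  induction x using Nat.strong_induction_on with
  | _ x IH =>
    intro hx
    by_cases h : x < t
    · rw [Nat.mod_eq_of_lt h]
    · push_neg at h
      have h1 : x - t + t = x := by omega
      have e1 : v x = v (x - t) := by
        have := H (x - t) (by omega)
        rw [h1] at this; exact this
      rw [e1, IH (x - t) (by omega) (by omega), Nat.mod_eq_sub_mod h]

/-- Fine–Wilf auxiliary, assuming `p ≤ r`. -/
lemma PSq.fwAux {β : Type*} (v : ℕ → β) :
    ∀ r p L, 0 < p → p ≤ r → p + r ≤ L →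
      (∀ x, x + p < L → v (x + p) = v x) →
      (∀ x, x + r < L → v (x + r) = v x) →
      ∀ x, x + Nat.gcd p r < L → v (x + Nat.gcd p r) = v x := by
  intro r
  induction r using Nat.strong_induction_on with
  | _ r IH =>
    intro p L hp hpr hsum Hp Hr x hx
    rcases eq_or_lt_of_le hpr with heq | hlt
    · subst heq
      rw [Nat.gcd_self] at hx ⊢
      exact Hp x hx
    · have hr' : 0 < r - p := by omega
      have hgcd : Nat.gcd p (r - p) = Nat.gcd p r := by
        conv_rhs => rw [show r = (r - p) + p by omega]
        rw [Nat.gcd_add_self_right]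
      have Hp' : ∀ y, y + p < L - p → v (y + p) = v y := fun y hy => Hp y (by omega)
      have Hr' : ∀ y, y + (r - p) < L - p → v (y + (r - p)) = v y := by
        intro y hy
        have e1 : v (y + (r - p) + p) = v (y + (r - p)) := Hp _ (by omega)
        have e2 : y + (r - p) + p = y + r := by omega
        rw [e2] at e1
        rw [← e1]
        exact Hr y (by omega)
      have main : ∀ y, y + Nat.gcd p r < L - p → v (y + Nat.gcd p r) = v y := by
        rcases le_total p (r - p) with h | h
        · intro y hy
          have := IH (r - p) (by omega) p (L - p) hp h (by omega) Hp' Hr' y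
            (by rw [hgcd]; exact hy)
          rwa [hgcd] at this
        · intro y hy
          have hg2 : Nat.gcd (r - p) p = Nat.gcd p r := by rw [Nat.gcd_comm, hgcd]
          have := IH p (by omega) (r - p) (L - p) hr' h (by omega) Hr' Hp' y
            (by rw [hg2]; exact hy)
          rwa [hg2] at this
      have hdvd : Nat.gcd p r ∣ r - p := hgcd ▸ Nat.gcd_dvd_right p (r - p)
      have hdr' : Nat.gcd p r ≤ r - p := Nat.le_of_dvd hr' hdvd
      have hgpos : 0 < Nat.gcd p r := Nat.gcd_pos_of_pos_left _ hp
      by_cases hcase : x + Nat.gcd p r < L - p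
      · exact main x hcase
      · have hxp : p ≤ x := by omega
        have e1 : v (x + Nat.gcd p r) = v (x - p + Nat.gcd p r) := by
          have h' := Hp (x - p + Nat.gcd p r) (by omega)
          have e2 : x - p + Nat.gcd p r + p = x + Nat.gcd p r := by omega
          rw [e2] at h'
          exact h'
        have e3 : v (x - p + Nat.gcd p r) = v (x - p) := main _ (by omega)
        have e4 : v x = v (x - p) := by
          have h' := Hp (x - p) (by omega)
          have e5 : x - p + p = x := by omega
          rw [e5] at h'
          exact h'
        rw [e1, e3, ← e4]

/-- Fine–Wilf: two periods `p`, `r` with `p + r ≤ L` imply period `gcd p r`. -/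
lemma PSq.fineWilf {β : Type*} (v : ℕ → β) (p r L : ℕ) (hp : 0 < p) (hr : 0 < r)
    (hsum : p + r ≤ L)
    (Hp : ∀ x, x + p < L → v (x + p) = v x)
    (Hr : ∀ x, x + r < L → v (x + r) = v x) :
    ∀ x, x + Nat.gcd p r < L → v (x + Nat.gcd p r) = v x := by
  rcases le_total p r with h | h
  · exact PSq.fwAux v r p L hp h hsum Hp Hr
  · intro x hx
    have hg : Nat.gcd r p = Nat.gcd p r := Nat.gcd_comm r p
    have := PSq.fwAux v p r L hr h (by omega) Hr Hp x (by rw [hg]; exact hx)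
    rwa [hg] at this

/-- Two nested twisted squares with common twist give an exact period. -/
lemma PSq.pairPeriod {β : Type*} {v : ℕ → β} {G : β → β} (hG : Function.Injective G)
    {k k' : ℕ} (hk : ∀ i < k, v (k + i) = G (v i)) (hk' : ∀ i < k', v (k' + i) = G (v i))
    (hlt : k < k') :
    ∀ i, i + (k' - k) < k → v (i + (k' - k)) = v i := by
  intro i hi
  apply hG
  have e1 : v (k' + i) = G (v i) := hk' i (by omega)
  have e2 : v (k + (i + (k' - k))) = G (v (i + (k' - k))) := hk _ (by omega)
  have e3 : k + (i + (k' - k)) = k' + i := by omega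
  rw [e3] at e2
  rw [← e2, e1]

/-- Key lemma: three nested twisted squares with a common twist `G`,
with `k3 < 2 * k1`, force the exact period `k2 - k1` on the whole prefix
of length `2 * k1`. -/
lemma PSq.keyPeriod {β : Type*} {v : ℕ → β} {G : β → β} (hG : Function.Injective G)
    {k1 k2 k3 : ℕ} (h1 : 0 < k1) (h12 : k1 < k2) (h23 : k2 < k3) (h31 : k3 < 2 * k1)
    (A1 : ∀ i < k1, v (k1 + i) = G (v i))
    (A2 : ∀ i < k2, v (k2 + i) = G (v i))
    (A3 : ∀ i < k3, v (k3 + i) = G (v i)) :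
    ∀ i < 2 * k1, v (i + (k2 - k1)) = v i := by
  set p := k2 - k1 with hpdef
  set r := k3 - k2 with hrdef
  have hp0 : 0 < p := by omega
  have hr0 : 0 < r := by omega
  have hprk : p + r < k1 := by omega
  have P1 : ∀ i, i + p < k1 → v (i + p) = v i := by
    have := PSq.pairPeriod hG A1 A2 h12
    simpa using this
  have P2 : ∀ i, i + r < k2 → v (i + r) = v i := by
    have := PSq.pairPeriod hG A2 A3 h23
    simpa using this
  have P2' : ∀ i, i + r < k1 → v (i + r) = v i := fun i hi => P2 i (by omega)
  set d := Nat.gcd p r with hddef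
  have hd0 : 0 < d := Nat.gcd_pos_of_pos_left _ hp0
  have hdp : d ∣ p := Nat.gcd_dvd_left p r
  have hdr : d ∣ r := Nat.gcd_dvd_right p r
  have Pd : ∀ x, x + d < k1 → v (x + d) = v x :=
    PSq.fineWilf v p r k1 hp0 hr0 (by omega) P1 P2'
  have Redd : ∀ x, x < k1 → v x = v (x % d) := PSq.redmod v d k1 hd0 Pd
  have Redr : ∀ x, x < k2 → v x = v (x % r) := PSq.redmod v r k2 hr0 P2
  have dagger : ∀ j, j < p → G (v j) = v ((k1 + j) % d) := by
    intro j hj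
    have e1 : v (k1 + j) = G (v j) := A1 j (by omega)
    have e2 : v (k1 + j) = v ((k1 + j) % r) := Redr _ (by omega)
    have hmlt : (k1 + j) % r < r := Nat.mod_lt _ hr0
    have e3 : v ((k1 + j) % r) = v ((k1 + j) % r % d) := Redd _ (by omega)
    have e4 : (k1 + j) % r % d = (k1 + j) % d := Nat.mod_mod_of_dvd _ hdr
    rw [← e1, e2, e3, e4]
  intro i hi
  by_cases c1 : i + p < k1
  · exact P1 i c1
  · by_cases c2 : k1 ≤ i
    · have e1 : v (i + p) = G (v (i - k1)) := by
        have h' := A2 (i - k1) (by omega)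
        have e : k2 + (i - k1) = i + p := by omega
        rw [e] at h'
        exact h'
      have e2 : v i = G (v (i - k1)) := by
        have h' := A1 (i - k1) (by omega)
        have e : k1 + (i - k1) = i := by omega
        rw [e] at h'
        exact h'
      rw [e1, e2]
    · push_neg at c1 c2
      set j := i + p - k1 with hjdef
      have hjp : j < p := by omega
      have e1 : v (i + p) = G (v j) := by
        have h' := A1 j (by omega)
        have e : k1 + j = i + p := by omega
        rw [e] at h'
        exact h'
      have e2 : G (v j) = v ((k1 + j) % d) := dagger j hjp
      have e3 : (k1 + j) % d = i % d := by
        have e : k1 + j = i + p := by omega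
        rw [e]
        obtain ⟨m, hm⟩ := hdp
        rw [hm, Nat.add_mul_mod_self_left]
      have e4 : v i = v (i % d) := Redd i c2
      rw [e1, e2, e3, ← e4]

/-! ### List-level lemmas -/

lemma PSq.frag_getElem?_lt {α : Type*} (w : List α) (s len i : ℕ) (h : i < len) :
    (frag w s len)[i]? = w[s + i]? := by
  unfold frag
  rw [List.getElem?_take, if_pos h, List.getElem?_drop]

lemma PSq.frag_eq_map {α : Type*} (w : List α) (f : α → α) (s len : ℕ)
    (h : ∀ i < len, w[s + i]? = (w[i]?).map f) :
    frag w s len = (frag w 0 len).map f := by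
  apply List.ext_getElem?
  intro i
  by_cases hi : i < len
  · rw [PSq.frag_getElem?_lt w s len i hi, List.getElem?_map,
      PSq.frag_getElem?_lt w 0 len i hi, Nat.zero_add]
    exact h i hi
  · push_neg at hi
    rw [List.getElem?_eq_none, List.getElem?_eq_none]
    · rw [List.length_map]
      unfold frag
      calc (List.take len (List.drop 0 w)).length ≤ len := by
            rw [List.length_take]; omega
        _ ≤ i := hi
    · unfold frag
      calc (List.take len (List.drop s w)).length ≤ len := by
            rw [List.length_take]; omega
        _ ≤ i := hi

/-- Extract the pointwise relation from a parameterized-square prefix. -/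
lemma PSq.square_data {α : Type*} (w : List α) (k : ℕ) (hk : 2 * k ≤ w.length)
    (hsq : IsParamSquare (frag w 0 (2 * k))) :
    ∃ f : α → α, Set.InjOn f {a | a ∈ w.take k} ∧
      ∀ i < k, w[k + i]? = (w[i]?).map f := by
  obtain ⟨u, v, heq, hlen, f, hinj, hmap⟩ := hsq
  have hfrag : frag w 0 (2 * k) = w.take (2 * k) := by simp [frag]
  rw [hfrag] at heq
  have hul : u.length = k := by
    have h := congrArg List.length heq
    rw [List.length_take, List.length_append, ← hlen] at h
    omega
  have hu : u = w.take k := by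
    have h1 : (w.take (2 * k)).take k = u := by
      conv_lhs => rw [heq, ← hul]
      exact List.take_left (l₁ := u) (l₂ := v)
    rw [List.take_take] at h1
    rw [← h1]
    congr 1
    omega
  refine ⟨f, by rw [← hu]; exact hinj, ?_⟩
  intro i hi
  have h1 : w[k + i]? = (w.take (2 * k))[k + i]? := by
    rw [List.getElem?_take, if_pos (by omega)]
  rw [h1, heq]
  have h2 : (u ++ v)[k + i]? = v[i]? := by
    rw [List.getElem?_append_right (by omega)]
    congr 1
    omega
  rw [h2, hmap, List.getElem?_map]
  congr 1
  rw [hu, List.getElem?_take, if_pos hi]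

/-- Extend an injective-on-a-list map to a permutation of a finite type. -/
lemma PSq.exists_perm_extend {α : Type*} [Fintype α] (u : List α) (f : α → α)
    (hf : Set.InjOn f {a | a ∈ u}) :
    ∃ g : Equiv.Perm α, ∀ a ∈ u, g a = f a := by
  classical
  set s : Finset α := u.toFinset with hsdef
  have hmem : ∀ a, a ∈ s ↔ a ∈ u := by
    intro a; simp [hsdef]
  have hfs : Set.InjOn f ↑s := by
    intro a ha b hb hab
    exact hf (by simpa [hmem] using ha) (by simpa [hmem] using hb) hab
  set t : Finset α := s.image f with htdef
  have hcard : t.card = s.card := Finset.card_image_of_injOn hfs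
  have hccard : sᶜ.card = tᶜ.card := by
    rw [Finset.card_compl, Finset.card_compl, hcard]
  set e2 := Finset.equivOfCardEq hccard with he2
  set G : α → α := fun x =>
    if hx : x ∈ s then f x else (e2 ⟨x, Finset.mem_compl.mpr hx⟩ : α) with hGdef
  have hGs : ∀ x (hx : x ∈ s), G x = f x := by
    intro x hx; simp [hGdef, hx]
  have hGns : ∀ x (hx : x ∉ s), G x = (e2 ⟨x, Finset.mem_compl.mpr hx⟩ : α) := by
    intro x hx; simp [hGdef, hx]
  have hGinj : Function.Injective G := by
    intro a b hab
    by_cases ha : a ∈ s <;> by_cases hb : b ∈ s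
    · rw [hGs a ha, hGs b hb] at hab
      exact hfs (by simpa using ha) (by simpa using hb) hab
    · exfalso
      have h1 : G a ∈ t := by
        rw [hGs a ha]
        exact Finset.mem_image_of_mem f ha
      have h2 : G b ∈ tᶜ := by
        rw [hGns b hb]
        exact (e2 ⟨b, Finset.mem_compl.mpr hb⟩).2
      rw [hab] at h1
      exact (Finset.mem_compl.mp h2) h1
    · exfalso
      have h1 : G b ∈ t := by
        rw [hGs b hb]
        exact Finset.mem_image_of_mem f hb
      have h2 : G a ∈ tᶜ := by
        rw [hGns a ha]
        exact (e2 ⟨a, Finset.mem_compl.mpr ha⟩).2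
      rw [← hab] at h1
      exact (Finset.mem_compl.mp h2) h1
    · rw [hGns a ha, hGns b hb] at hab
      have h3 : e2 ⟨a, Finset.mem_compl.mpr ha⟩ = e2 ⟨b, Finset.mem_compl.mpr hb⟩ :=
        Subtype.ext hab
      have h4 := e2.injective h3
      exact congrArg Subtype.val h4
  have hGbij : Function.Bijective G := Finite.injective_iff_bijective.mp hGinj
  refine ⟨Equiv.ofBijective G hGbij, ?_⟩
  intro a ha
  show G a = f a
  exact hGs a ((hmem a).mpr ha)

/-- From a parameterized-square prefix, get a permutation twist. -/
lemma PSq.square_rel {α : Type*} [Fintype α] (w : List α) (k : ℕ) (hk : 2 * k ≤ w.length)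
    (hsq : IsParamSquare (frag w 0 (2 * k))) :
    ∃ g : Equiv.Perm α, ∀ i < k, w[k + i]? = (w[i]?).map (g : α → α) := by
  obtain ⟨f, hinj, hrel⟩ := PSq.square_data w k hk hsq
  obtain ⟨g, hg⟩ := PSq.exists_perm_extend (w.take k) f hinj
  refine ⟨g, fun i hi => ?_⟩
  rw [hrel i hi]
  by_cases hw : i < w.length
  · have hwi : w[i]? = some (w[i]'hw) := List.getElem?_eq_getElem hw
    have ha : w[i]'hw ∈ w.take k := by
      apply List.mem_of_getElem? (i := i)
      rw [List.getElem?_take, if_pos hi]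
      exact hwi
    rw [hwi]
    simp [hg _ ha]
  · rw [List.getElem?_eq_none (by omega)]
    rfl

/-- Step 1: if `k < k'` are both half-lengths of parameterized-square prefixes and the
`2k`-prefix has no later parameterized occurrence, then `k' < 2 * k`. -/
lemma PSq.step1 {α : Type*} (w : List α) {k k' : ℕ} (h1 : 1 ≤ k) (hkk' : k < k')
    (hlen' : 2 * k' ≤ w.length)
    (hsq' : IsParamSquare (frag w 0 (2 * k')))
    (hno : ¬∃ s, 1 ≤ s ∧ s + 2 * k ≤ w.length ∧
      ParamEquiv (frag w 0 (2 * k)) (frag w s (2 * k))) :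
    k' < 2 * k := by
  by_contra hcon
  push_neg at hcon
  obtain ⟨f, hinj, hrel⟩ := PSq.square_data w k' hlen' hsq'
  apply hno
  refine ⟨k', by omega, by omega, f, ?_, PSq.frag_eq_map w f k' (2 * k)
    (fun i hi => hrel i (by omega))⟩
  have hsub : {a | a ∈ frag w 0 (2 * k)} ⊆ {a | a ∈ w.take k'} := by
    intro a ha
    simp only [Set.mem_setOf_eq, frag, List.drop_zero] at ha ⊢
    have h2 : w.take (2 * k) = (w.take k').take (2 * k) := by
      rw [List.take_take]
      congr 1
      omega
    rw [h2] at ha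
    exact List.take_subset _ _ ha
  exact hinj.mono hsub

/-- No three elements of the special set can share the same twist permutation. -/
lemma PSq.no_three {α : Type*} (w : List α) (g : α → α) (hg : Function.Injective g)
    {k1 k2 k3 : ℕ} (h1 : 1 ≤ k1) (h12 : k1 < k2) (h23 : k2 < k3)
    (h3len : 2 * k3 ≤ w.length) (h31 : k3 < 2 * k1)
    (A1 : ∀ i < k1, w[k1 + i]? = (w[i]?).map g)
    (A2 : ∀ i < k2, w[k2 + i]? = (w[i]?).map g)
    (A3 : ∀ i < k3, w[k3 + i]? = (w[i]?).map g) :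
    ∃ s, 1 ≤ s ∧ s + 2 * k1 ≤ w.length ∧
      ParamEquiv (frag w 0 (2 * k1)) (frag w s (2 * k1)) := by
  have key : ∀ i < 2 * k1, w[i + (k2 - k1)]? = w[i]? :=
    PSq.keyPeriod (v := fun i => w[i]?) (Option.map_injective hg)
      (by omega) h12 h23 h31 A1 A2 A3
  refine ⟨k2 - k1, by omega, by omega, id, Set.injOn_id _, ?_⟩
  have := PSq.frag_eq_map w id (k2 - k1) (2 * k1) (fun i hi => by
    rw [Nat.add_comm (k2 - k1) i, key i hi, Option.map_id]
    rfl)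
  exact this

/-- Let `Σ` be an alphabet of size `σ` and `w ∈ Σ*`.  The number of even lengths `2k ≥ 2`
such that the prefix of `w` of length `2k` is a parameterized square and no fragment of `w`
of length `2k` starting at a later position is parameterized-equivalent to this prefix, is
at most `2·σ!`. -/
theorem param_square_prefixes_without_later_occurrence {α : Type*} [Fintype α]
    (w : List α) :
    {k : ℕ | 1 ≤ k ∧ 2 * k ≤ w.length ∧ IsParamSquare (frag w 0 (2 * k)) ∧
        ¬∃ s : ℕ, 1 ≤ s ∧ s + 2 * k ≤ w.length ∧
          ParamEquiv (frag w 0 (2 * k)) (frag w s (2 * k))}.ncard ≤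
      2 * (Fintype.card α).factorial := by
  classical
  set T : Set ℕ := {k : ℕ | 1 ≤ k ∧ 2 * k ≤ w.length ∧ IsParamSquare (frag w 0 (2 * k)) ∧
        ¬∃ s : ℕ, 1 ≤ s ∧ s + 2 * k ≤ w.length ∧
          ParamEquiv (frag w 0 (2 * k)) (frag w s (2 * k))} with hTdef
  have hTmem : ∀ k, k ∈ T ↔ (1 ≤ k ∧ 2 * k ≤ w.length ∧ IsParamSquare (frag w 0 (2 * k)) ∧
      ¬∃ s : ℕ, 1 ≤ s ∧ s + 2 * k ≤ w.length ∧
        ParamEquiv (frag w 0 (2 * k)) (frag w s (2 * k))) := by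
    intro k; rw [hTdef]; rfl
  have hsub : T ⊆ Set.Icc 1 w.length := by
    intro k hk
    rw [hTmem] at hk
    exact ⟨hk.1, by have := hk.2.1; omega⟩
  have hfin : T.Finite := (Set.finite_Icc 1 w.length).subset hsub
  rw [Set.ncard_eq_toFinset_card T hfin]
  set t : Finset ℕ := hfin.toFinset with htdef
  have htmem : ∀ k, k ∈ t ↔ k ∈ T := fun k => Set.Finite.mem_toFinset hfin
  set Q : ℕ → Equiv.Perm α → Prop :=
    fun k g => ∀ i < k, w[k + i]? = (w[i]?).map (g : α → α) with hQdef
  have hexQ : ∀ k, k ∈ t → ∃ g : Equiv.Perm α, Q k g := by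
    intro k hk
    have hk' := (htmem k).mp hk
    rw [hTmem] at hk'
    exact PSq.square_rel w k hk'.2.1 hk'.2.2.1
  set F : ℕ → Equiv.Perm α := fun k =>
    if h : ∃ g : Equiv.Perm α, Q k g then h.choose else 1 with hFdef
  have hF : ∀ k ∈ t, Q k (F k) := by
    intro k hk
    have hex := hexQ k hk
    rw [hFdef]
    simp only [dif_pos hex]
    exact hex.choose_spec
  have tripl : ∀ x y z : ℕ, x ∈ t → y ∈ t → z ∈ t →
      Q x (F x) → Q y (F y) → Q z (F z) → F x = F y → F y = F z →
      x < y → y < z → False := by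
    intro x y z hxt hyt hzt hxQ hyQ hzQ hFxy hFyz hxy hyz
    have hxT := (htmem x).mp hxt
    have hyT := (htmem y).mp hyt
    have hzT := (htmem z).mp hzt
    rw [hTmem] at hxT hyT hzT
    have hzlen : 2 * z ≤ w.length := hzT.2.1
    have hz2 : z < 2 * x :=
      PSq.step1 w hxT.1 (lt_trans hxy hyz) hzlen hzT.2.2.1 hxT.2.2.2
    have hyQ' : Q y (F x) := by rw [hFxy]; exact hyQ
    have hzQ' : Q z (F x) := by rw [hFxy, hFyz]; exact hzQ
    exact hxT.2.2.2 (PSq.no_three w (F x : α → α) (Equiv.injective (F x))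
      hxT.1 hxy hyz hzlen hz2 hxQ hyQ' hzQ')
  have hfiber : ∀ g ∈ t.image F, (t.filter fun k => F k = g).card ≤ 2 := by
    intro g _
    by_contra hcard
    push_neg at hcard
    obtain ⟨a, ha, b, hb, c, hc, hab, hac, hbc⟩ := Finset.two_lt_card.mp hcard
    rw [Finset.mem_filter] at ha hb hc
    have hQa := hF a ha.1
    have hQb := hF b hb.1
    have hQc := hF c hc.1
    have hFab : F a = F b := by rw [ha.2, hb.2]
    have hFbc : F b = F c := by rw [hb.2, hc.2]
    have hFac : F a = F c := by rw [ha.2, hc.2]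
    rcases lt_trichotomy a b with h1 | h1 | h1
    · rcases lt_trichotomy b c with h2 | h2 | h2
      · exact tripl a b c ha.1 hb.1 hc.1 hQa hQb hQc hFab hFbc h1 h2
      · exact hbc h2
      · rcases lt_trichotomy a c with h3 | h3 | h3
        · exact tripl a c b ha.1 hc.1 hb.1 hQa hQc hQb hFac hFbc.symm h3 h2
        · exact hac h3
        · exact tripl c a b hc.1 ha.1 hb.1 hQc hQa hQb hFac.symm hFab h3 h1
    · exact hab h1
    · rcases lt_trichotomy a c with h2 | h2 | h2
      · exact tripl b a c hb.1 ha.1 hc.1 hQb hQa hQc hFab.symm hFac h1 h2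
      · exact hac h2
      · rcases lt_trichotomy b c with h3 | h3 | h3
        · exact tripl b c a hb.1 hc.1 ha.1 hQb hQc hQa hFbc hFac.symm h3 h2
        · exact hbc h3
        · exact tripl c b a hc.1 hb.1 ha.1 hQc hQb hQa hFbc.symm hFab.symm h3 h1
  calc t.card ≤ 2 * (t.image F).card := Finset.card_le_mul_card_image t 2 hfiber
    _ ≤ 2 * Fintype.card (Equiv.Perm α) :=
        Nat.mul_le_mul_left 2 (Finset.card_le_univ _)
    _ = 2 * (Fintype.card α).factorial := by rw [Fintype.card_perm]
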